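/- arXiv:2510.25858 — 10 statements merged into one kernel-verified Lean document; each statement's English description precedes it below -/
import Mathlib

section
/- Let G be a graph of diameter 2 and S a mutual-visibility set of size s. Then C(s,2) − e(S) ≤ Σ_{w ∈ V(G)\S} C(|N(w) ∩ S|, 2), where e(S) is the number of edges of the induced subgraph G[S] and C(n,k) denotes binomial coefficients. -/
/-!
Split the two-element subsets of `S` into edges and non-edges of `G[S]`. Two non-adjacent
vertices `u, v ∈ S` are at distance exactly `2`, so a shortest `u`-`v` path that avoids `S`
internally has a middle vertex `w ∉ S` adjacent to both; hence every non-edge is a pair inside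
`N(w) ∩ S` for some `w ∉ S`, and a union bound over `w` gives the sum.
-/

open scoped Classical

def SimpleGraph.MutualVisibilitySet {V : Type*} (G : SimpleGraph V) (S : Set V) : Prop :=
  ∀ u ∈ S, ∀ v ∈ S, ∃ p : G.Walk u v, p.length = G.dist u v ∧
    ∀ w ∈ p.support, w ∈ S → w = u ∨ w = v

noncomputable def edgesWithin {V : Type*} (G : SimpleGraph V) (S : Set V) : ℕ :=
  {e ∈ G.edgeSet | ∀ v ∈ e, v ∈ S}.ncard

namespace SimpleGraph

open Finset

variable {V : Type*} {G : SimpleGraph V}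

theorem Walk.exists_adj_adj_of_length_eq_two {u v : V} (p : G.Walk u v) (hp : p.length = 2) :
    ∃ w ∈ p.support, G.Adj u w ∧ G.Adj w v := by
  rcases p with _ | ⟨h₁, _ | ⟨h₂, _ | ⟨_, q⟩⟩⟩
  · simp at hp
  · simp at hp
  · exact ⟨_, by simp, h₁, h₂⟩
  · simp at hp

theorem MutualVisibilitySet.exists_common_neighbor_notMem {S : Set V}
    (hS : G.MutualVisibilitySet S) {u v : V} (hu : u ∈ S) (hv : v ∈ S) (huv : u ≠ v)
    (hadj : ¬G.Adj u v) (hdist : G.dist u v ≤ 2) : ∃ w ∉ S, G.Adj w u ∧ G.Adj w v := by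
  obtain ⟨p, hlen, hvis⟩ := hS u hu v hv
  have hpos : 0 < G.dist u v := Reachable.pos_dist_of_ne ⟨p⟩ huv
  have hne_one : G.dist u v ≠ 1 := fun h => hadj (dist_eq_one_iff_adj.mp h)
  obtain ⟨w, hw, huw, hwv⟩ := p.exists_adj_adj_of_length_eq_two (by omega)
  refine ⟨w, fun hwS => ?_, huw.symm, hwv⟩
  rcases hvis w hw hwS with rfl | rfl
  · exact G.irrefl huw
  · exact G.irrefl hwv

theorem edgesWithin_eq_card_filter_sym2 (S : Finset V) :
    edgesWithin G S = #{z ∈ S.sym2 | z ∈ G.edgeSet} := by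
  rw [edgesWithin, ← Set.ncard_coe_finset]
  congr 1
  ext z
  simp [Finset.mem_sym2_iff, and_comm]

theorem choose_two_le_edgesWithin_add_sum [Fintype V] [DecidableEq V] (S : Finset V)
    (h : ∀ u ∈ S, ∀ v ∈ S, u ≠ v → ¬G.Adj u v → ∃ w ∉ S, G.Adj w u ∧ G.Adj w v) :
    (#S).choose 2 ≤ edgesWithin G S + ∑ w ∈ Sᶜ, (#{u ∈ S | G.Adj w u}).choose 2 := by
  set pairs : Finset V → Finset (Sym2 V) := fun T => T.offDiag.image Sym2.mk.uncurry
  have hedges : #{z ∈ pairs S | z ∈ G.edgeSet} ≤ edgesWithin G S := by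
    rw [edgesWithin_eq_card_filter_sym2]
    refine card_le_card (filter_subset_filter _ ?_)
    intro z hz
    obtain ⟨⟨a, b⟩, hab, rfl⟩ := mem_image.mp hz
    simp only [mem_offDiag] at hab
    simp [Finset.mem_sym2_iff, hab.1, hab.2.1]
  have hnonedges :
      {z ∈ pairs S | z ∉ G.edgeSet} ⊆ Sᶜ.biUnion fun w => pairs {u ∈ S | G.Adj w u} := by
    intro z hz
    obtain ⟨hz, hzG⟩ := mem_filter.mp hz
    obtain ⟨⟨a, b⟩, hab, rfl⟩ := mem_image.mp hz
    obtain ⟨ha, hb, hab⟩ := mem_offDiag.mp hab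
    obtain ⟨w, hw, hwa, hwb⟩ :=
      h a (by simpa using ha) b (by simpa using hb) hab (by simpa using hzG)
    simp only [mem_biUnion, mem_compl]
    exact ⟨w, hw, mem_image.mpr ⟨(a, b), by simp_all, rfl⟩⟩
  calc (#S).choose 2 = #(pairs S) := (Sym2.card_image_offDiag S).symm
    _ = #{z ∈ pairs S | z ∈ G.edgeSet} + #{z ∈ pairs S | z ∉ G.edgeSet} :=
      (card_filter_add_card_filter_not _).symm
    _ ≤ edgesWithin G S + ∑ w ∈ Sᶜ, #(pairs {u ∈ S | G.Adj w u}) :=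
      add_le_add hedges ((card_le_card hnonedges).trans card_biUnion_le)
    _ = edgesWithin G S + ∑ w ∈ Sᶜ, (#{u ∈ S | G.Adj w u}).choose 2 := by
      simp only [pairs, Sym2.card_image_offDiag]

end SimpleGraph

theorem stmt1 {V : Type*} [Fintype V] [DecidableEq V] (G : SimpleGraph V)
    (hdiam : G.diam = 2) (S : Finset V) (hS : G.MutualVisibilitySet ↑S) :
    S.card.choose 2 - edgesWithin G ↑S ≤
      ∑ w ∈ Sᶜ, ({u ∈ (S : Set V) | G.Adj w u}.ncard).choose 2 := by
  have hdist (u v : V) : G.dist u v ≤ 2 :=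
    hdiam ▸ G.dist_le_diam (SimpleGraph.ediam_ne_top_of_diam_ne_zero (by omega))
  have key := SimpleGraph.choose_two_le_edgesWithin_add_sum S fun u hu v hv huv hadj =>
    hS.exists_common_neighbor_notMem (Finset.mem_coe.mpr hu) (Finset.mem_coe.mpr hv) huv hadj
      (hdist u v)
  have hncard (w : V) :
      {u ∈ (S : Set V) | G.Adj w u}.ncard = (S.filter fun u => G.Adj w u).card := by
    rw [← Set.ncard_coe_finset, Finset.coe_filter]; rfl
  simp only [hncard]
  omega
end

section
/- Let G be a graph of diameter 2 on n ≥ 2 vertices with maximum degree Δ ≥ 2. If S is a mutual-visibility set of G of size s, then s² + (Δ² − 2Δ − 1)s − Δ(Δ−1)n ≤ 0. -/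
open scoped Classical

theorem stmt4 {V : Type*} [Fintype V] [DecidableEq V] (G : SimpleGraph V)
    [DecidableRel G.Adj] (n Δ : ℕ) (hn : Fintype.card V = n) (hn2 : 2 ≤ n)
    (hΔ : G.maxDegree = Δ) (hΔ2 : 2 ≤ Δ) (hdiam : G.diam = 2)
    (S : Finset V) (hS : G.MutualVisibilitySet ↑S) (s : ℕ) (hs : S.card = s) :
    (s : ℤ) ^ 2 + ((Δ : ℤ) ^ 2 - 2 * Δ - 1) * s - Δ * (Δ - 1) * n ≤ 0 := by
  classical
  have hdeg : ∀ v : V, G.degree v ≤ Δ := by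
    intro v; rw [← hΔ]; exact G.degree_le_maxDegree v
  -- every pair of distinct vertices of S is adjacent or has a common neighbor outside S
  have key : ∀ u ∈ S, ∀ v ∈ S, u ≠ v →
      G.Adj u v ∨ ∃ w, w ∉ S ∧ G.Adj u w ∧ G.Adj w v := by
    intro u hu v hv huv
    obtain ⟨p, hlen, hsup⟩ := hS u (by exact_mod_cast hu) v (by exact_mod_cast hv)
    have hd : p.length ≤ 2 := by
      rw [hlen, ← hdiam]
      exact G.dist_le_diam (G.ediam_ne_top_of_diam_ne_zero (by rw [hdiam]; norm_num))
    rcases p with _ | ⟨h1, q⟩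
    · exact absurd rfl huv
    · rename_i b
      rcases q with _ | ⟨h2, r⟩
      · exact Or.inl h1
      · rename_i c
        rcases r with _ | ⟨h3, t⟩
        · right
          refine ⟨b, ?_, h1, h2⟩
          intro hbS
          have hb : b ∈ (SimpleGraph.Walk.cons h1 (SimpleGraph.Walk.cons h2 SimpleGraph.Walk.nil)).support := by
            simp
          rcases hsup b hb (by exact_mod_cast hbS) with rfl | rfl
          · exact G.irrefl h1
          · exact G.irrefl h2
        · simp only [SimpleGraph.Walk.length_cons] at hd
          omega
  -- counting
  set D : Finset (V × V) := S.offDiag with hD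
  set A : Finset (V × V) := D.filter (fun p => G.Adj p.1 p.2) with hA
  set B : Finset (V × V) := D.filter (fun p => ¬ G.Adj p.1 p.2) with hB
  have hsplit : A.card + B.card = D.card :=
    Finset.card_filter_add_card_filter_not _
  have hDc : D.card = s * s - s := by rw [hD, Finset.offDiag_card, hs]
  have hAcard : A.card ≤ s * Δ := by
    have hsub : A ⊆ S.biUnion (fun u => ({u} : Finset V) ×ˢ G.neighborFinset u) := by
      intro p hp
      simp only [hA, hD, Finset.mem_filter, Finset.mem_offDiag] at hp
      obtain ⟨⟨h1, h2, h3⟩, h4⟩ := hp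
      simp only [Finset.mem_biUnion, Finset.mem_product, Finset.mem_singleton,
        SimpleGraph.mem_neighborFinset]
      exact ⟨p.1, h1, rfl, h4⟩
    calc A.card ≤ ∑ u ∈ S, (({u} : Finset V) ×ˢ G.neighborFinset u).card :=
          le_trans (Finset.card_le_card hsub) (Finset.card_biUnion_le)
      _ ≤ ∑ _u ∈ S, Δ := by
          apply Finset.sum_le_sum
          intro u _
          rw [Finset.card_product, Finset.card_singleton, one_mul]
          exact hdeg u
      _ = s * Δ := by rw [Finset.sum_const, smul_eq_mul, hs]
  have hBcard : B.card ≤ (n - s) * (Δ * Δ - Δ) := by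
    have hsub : B ⊆ Sᶜ.biUnion (fun w => (G.neighborFinset w).offDiag) := by
      intro p hp
      simp only [hB, hD, Finset.mem_filter, Finset.mem_offDiag] at hp
      obtain ⟨⟨h1, h2, h3⟩, h4⟩ := hp
      rcases key p.1 h1 p.2 h2 h3 with hadj | ⟨w, hw, hw1, hw2⟩
      · exact absurd hadj h4
      · simp only [Finset.mem_biUnion, Finset.mem_compl, Finset.mem_offDiag,
          SimpleGraph.mem_neighborFinset]
        exact ⟨w, hw, hw1.symm, hw2, h3⟩
    calc B.card ≤ ∑ w ∈ Sᶜ, ((G.neighborFinset w).offDiag).card :=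
          le_trans (Finset.card_le_card hsub) (Finset.card_biUnion_le)
      _ ≤ ∑ _w ∈ Sᶜ, (Δ * Δ - Δ) := by
          apply Finset.sum_le_sum
          intro w _
          rw [Finset.offDiag_card]
          have hdw : G.degree w ≤ Δ := hdeg w
          have : (G.neighborFinset w).card = G.degree w := rfl
          rw [this]
          calc G.degree w * G.degree w - G.degree w
              ≤ G.degree w * Δ - G.degree w := by
                exact Nat.sub_le_sub_right (Nat.mul_le_mul_left _ hdw) _
            _ = G.degree w * (Δ - 1) := by rw [Nat.mul_sub, Nat.mul_one]
            _ ≤ Δ * (Δ - 1) := Nat.mul_le_mul_right _ hdw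
            _ = Δ * Δ - Δ := by rw [Nat.mul_sub, Nat.mul_one]
      _ = (n - s) * (Δ * Δ - Δ) := by
          rw [Finset.sum_const, smul_eq_mul, Finset.card_compl, hs, hn]
  have hsn : s ≤ n := by rw [← hs, ← hn]; exact Finset.card_le_univ S
  have hss : s ≤ s * s := by
    rcases Nat.eq_zero_or_pos s with h | h
    · simp [h]
    · exact Nat.le_mul_of_pos_left s h
  have hΔΔ : Δ ≤ Δ * Δ := Nat.le_mul_of_pos_left Δ (by omega)
  -- combine
  have hmain : s * s - s ≤ s * Δ + (n - s) * (Δ * Δ - Δ) := by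
    rw [← hDc, ← hsplit]
    exact Nat.add_le_add hAcard hBcard
  zify [hsn, hss, hΔΔ] at hmain
  nlinarith [hmain]
end

section
/- Let G be a triangle-free graph in which every pair of non-adjacent vertices has a unique common neighbour. Then S ⊆ V(G) is a mutual-visibility set of G if and only if the induced subgraph G[S] has maximum degree at most 1. -/
open scoped Classical

theorem stmt5 {V : Type*} [Fintype V] (G : SimpleGraph V)
    (htf : G.CliqueFree 3)
    (huniq : ∀ u v : V, u ≠ v → ¬ G.Adj u v → ∃! w, G.Adj u w ∧ G.Adj w v)
    (S : Set V) :
    G.MutualVisibilitySet S ↔ ∀ v ∈ S, {u ∈ S | G.Adj v u}.ncard ≤ 1 := by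
  constructor
  · intro h v hv
    by_contra hc
    push_neg at hc
    obtain ⟨a, ha, b, hb, hab⟩ := (Set.one_lt_ncard (Set.toFinite _)).mp hc
    obtain ⟨haS, hva⟩ := ha
    obtain ⟨hbS, hvb⟩ := hb
    -- a and b are not adjacent (triangle-free)
    have hnadj : ¬ G.Adj a b := by
      intro hadj
      exact htf {v, a, b} (SimpleGraph.is3Clique_triple_iff.mpr ⟨hva, hvb, hadj⟩)
    obtain ⟨w0, hw0, hwu⟩ := huniq a b hab hnadj
    have hvmid : G.Adj a v ∧ G.Adj v b := ⟨hva.symm, hvb⟩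
    -- dist a b = 2
    have hle : G.dist a b ≤ 2 := by
      have := SimpleGraph.dist_le (SimpleGraph.Walk.cons hva.symm (SimpleGraph.Walk.cons hvb SimpleGraph.Walk.nil) : G.Walk a b)
      simpa using this
    have hreach : G.Reachable a b := ⟨SimpleGraph.Walk.cons hva.symm (SimpleGraph.Walk.cons hvb SimpleGraph.Walk.nil)⟩
    have hpos : 0 < G.dist a b := hreach.pos_dist_of_ne hab
    have hne1 : G.dist a b ≠ 1 := fun h1 => hnadj (SimpleGraph.dist_eq_one_iff_adj.mp h1)
    have hd2 : G.dist a b = 2 := by omega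
    obtain ⟨p, hplen, hpsup⟩ := h a haS b hbS
    rw [hd2] at hplen
    -- destructure p of length 2
    cases p with
    | nil => simp at hplen
    | cons h1 q =>
      cases q with
      | nil => simp at hplen
      | cons h2 r =>
        cases r with
        | cons h3 s => simp [SimpleGraph.Walk.length_cons] at hplen
        | nil =>
          rename_i m
          have hm : m = v := (hwu m ⟨h1, h2⟩).trans (hwu v hvmid).symm
          have hmem : m ∈ (SimpleGraph.Walk.cons h1 (SimpleGraph.Walk.cons h2 SimpleGraph.Walk.nil)).support := by
            simp
          have := hpsup m hmem (hm ▸ hv)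
          rcases this with h | h
          · exact G.irrefl (h ▸ h1)
          · exact G.irrefl (h ▸ h2)
  · intro h u hu v hv
    by_cases huv : u = v
    · subst huv
      exact ⟨SimpleGraph.Walk.nil, by simp [SimpleGraph.dist_self], by simp⟩
    by_cases hadj : G.Adj u v
    · refine ⟨hadj.toWalk, ?_, ?_⟩
      · simp [SimpleGraph.dist_eq_one_iff_adj.mpr hadj]
      · intro w hw _
        simpa using hw
    · obtain ⟨w, ⟨hw1, hw2⟩, _⟩ := huniq u v huv hadj
      have hwS : w ∉ S := by
        intro hwS
        have h2 : 1 < {x ∈ S | G.Adj w x}.ncard := by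
          rw [Set.one_lt_ncard (Set.toFinite _)]
          exact ⟨u, ⟨hu, hw1.symm⟩, v, ⟨hv, hw2⟩, huv⟩
        exact absurd (h w hwS) (not_le.mpr h2)
      refine ⟨SimpleGraph.Walk.cons hw1 (SimpleGraph.Walk.cons hw2 SimpleGraph.Walk.nil), ?_, ?_⟩
      · have hle : G.dist u v ≤ 2 := by
          have := SimpleGraph.dist_le (SimpleGraph.Walk.cons hw1 (SimpleGraph.Walk.cons hw2 SimpleGraph.Walk.nil) : G.Walk u v)
          simpa using this
        have hreach : G.Reachable u v := ⟨SimpleGraph.Walk.cons hw1 (SimpleGraph.Walk.cons hw2 SimpleGraph.Walk.nil)⟩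
        have hpos : 0 < G.dist u v := hreach.pos_dist_of_ne huv
        have hne1 : G.dist u v ≠ 1 := fun h1 => hadj (SimpleGraph.dist_eq_one_iff_adj.mp h1)
        simp only [SimpleGraph.Walk.length_cons, SimpleGraph.Walk.length_nil]
        omega
      · intro x hx hxS
        simp only [SimpleGraph.Walk.support_cons, SimpleGraph.Walk.support_nil,
          List.mem_cons, List.mem_singleton] at hx
        rcases hx with rfl | rfl | rfl | h'
        · exact Or.inl rfl
        · exact absurd hxS hwS
        · exact Or.inr rfl
        · simp at h'
end

section
/- Let G be a triangle-free graph in which every pair of non-adjacent vertices has a unique common neighbour. If S is a mutual-visibility set of G, then 2·e(S) ≤ |S|, where e(S) is the number of edges of the induced subgraph G[S]. -/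
open scoped Classical

/-- Key lemma: no path of length 2 inside a mutual-visibility set. -/
lemma key {V : Type*} (G : SimpleGraph V)
    (htf : G.CliqueFree 3)
    (huniq : ∀ u v : V, u ≠ v → ¬ G.Adj u v → ∃! w, G.Adj u w ∧ G.Adj w v)
    (S : Finset V) (hS : G.MutualVisibilitySet ↑S)
    {u v w : V} (hu : u ∈ S) (hv : v ∈ S) (hw : w ∈ S)
    (huv : G.Adj u v) (hvw : G.Adj v w) : u = w := by
  by_contra hne
  have hnadj : ¬ G.Adj u w := by
    intro hadj
    exact htf {u, v, w} (SimpleGraph.is3Clique_triple_iff.2 ⟨huv, hadj, hvw⟩)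
  obtain ⟨x, hx, hxuniq⟩ := huniq u w hne hnadj
  obtain ⟨p, hlen, hsupp⟩ := hS u hu w hw
  -- dist u w ≤ 2
  have hdle : G.dist u w ≤ 2 := by
    have := G.dist_le (SimpleGraph.Walk.cons huv (SimpleGraph.Walk.cons hvw SimpleGraph.Walk.nil))
    simpa using this
  have hlen2 : p.length = 2 := by
    have h0 : p.length ≠ 0 := fun h => hne (p.eq_of_length_eq_zero h)
    have h1 : p.length ≠ 1 := by
      intro h
      exact hnadj (SimpleGraph.dist_eq_one_iff_adj.mp (hlen.symm.trans h))
    omega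
  set y := p.getVert 1 with hy
  have hadj1 : G.Adj u y := by
    have := p.adj_getVert_succ (i := 0) (by omega)
    simpa [hy] using this
  have hadj2 : G.Adj y w := by
    have h2 := p.adj_getVert_succ (i := 1) (by omega)
    have h3 : p.getVert 2 = w := by rw [← hlen2]; exact p.getVert_length
    rw [h3] at h2
    exact h2
  have hyv : y = v := by
    have := hxuniq y ⟨hadj1, hadj2⟩
    have hv' := hxuniq v ⟨huv, hvw⟩
    rw [this, hv']
  have hys : y ∈ p.support :=
    SimpleGraph.Walk.mem_support_iff_exists_getVert.2 ⟨1, hy.symm, by omega⟩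
  have := hsupp y hys (by rw [hyv]; exact hv)
  rcases this with h | h
  · exact G.irrefl (h ▸ hadj1)
  · exact G.irrefl (h ▸ hadj2)

theorem stmt6 {V : Type*} [Fintype V] (G : SimpleGraph V)
    (htf : G.CliqueFree 3)
    (huniq : ∀ u v : V, u ≠ v → ¬ G.Adj u v → ∃! w, G.Adj u w ∧ G.Adj w v)
    (S : Finset V) (hS : G.MutualVisibilitySet ↑S) :
    2 * edgesWithin G ↑S ≤ S.card := by
  classical
  set Efin : Finset (Sym2 V) :=
    Finset.univ.filter (fun e => e ∈ G.edgeSet ∧ ∀ v ∈ e, v ∈ (S : Set V)) with hEfin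
  have hcard : edgesWithin G ↑S = Efin.card := by
    rw [edgesWithin]
    have : {e ∈ G.edgeSet | ∀ v ∈ e, v ∈ (S : Set V)} = ↑Efin := by
      ext e; simp [hEfin]
    rw [this, Set.ncard_coe_finset]
  -- map each edge to its endpoint pair
  let f : Sym2 V → Finset V :=
    Sym2.lift ⟨fun a b => ({a, b} : Finset V), fun a b => Finset.pair_comm a b⟩
  have hmemf : ∀ (e : Sym2 V) (x : V), x ∈ f e ↔ x ∈ e := by
    intro e x
    induction e with
    | _ a b => simp [f, Sym2.mem_iff]
  have hf_mem : ∀ e ∈ Efin, ∀ x ∈ f e, x ∈ S := by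
    intro e he x hx
    simp only [hEfin, Finset.mem_filter] at he
    exact he.2.2 x ((hmemf e x).1 hx)
  have hf_card : ∀ e ∈ Efin, (f e).card = 2 := by
    intro e he
    simp only [hEfin, Finset.mem_filter] at he
    induction e with
    | _ a b =>
      have hab : a ≠ b := G.ne_of_adj he.2.1
      simp [f, Finset.card_insert_of_notMem, hab]
  have hdisj : ∀ e₁ ∈ Efin, ∀ e₂ ∈ Efin, e₁ ≠ e₂ → Disjoint (f e₁) (f e₂) := by
    intro e₁ he₁ e₂ he₂ hne
    rw [Finset.disjoint_left]
    intro x hx1 hx2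
    simp only [hEfin, Finset.mem_filter] at he₁ he₂
    have hx1' : x ∈ e₁ := (hmemf e₁ x).1 hx1
    have hx2' : x ∈ e₂ := (hmemf e₂ x).1 hx2
    have h1 := Sym2.other_spec hx1'
    have h2 := Sym2.other_spec hx2'
    set y₁ := Sym2.Mem.other hx1'
    set y₂ := Sym2.Mem.other hx2'
    have hadj1 : G.Adj x y₁ := by rw [← SimpleGraph.mem_edgeSet, h1]; exact he₁.2.1
    have hadj2 : G.Adj x y₂ := by rw [← SimpleGraph.mem_edgeSet, h2]; exact he₂.2.1
    have hy₁S : y₁ ∈ S := by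
      have := he₁.2.2 y₁ (Sym2.other_mem hx1'); simpa using this
    have hy₂S : y₂ ∈ S := by
      have := he₂.2.2 y₂ (Sym2.other_mem hx2'); simpa using this
    have hxS : x ∈ S := by have := he₁.2.2 x hx1'; simpa using this
    have : y₁ = y₂ := key G htf huniq S hS hy₁S hxS hy₂S hadj1.symm hadj2
    exact hne (by rw [← h1, ← h2, this])
  have hsum : ∑ e ∈ Efin, (f e).card = (Efin.biUnion f).card :=
    (Finset.card_biUnion hdisj).symm
  have hsub : Efin.biUnion f ⊆ S := by
    intro x hx
    obtain ⟨e, he, hxe⟩ := Finset.mem_biUnion.1 hx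
    exact hf_mem e he x hxe
  calc 2 * edgesWithin G ↑S = ∑ e ∈ Efin, (f e).card := by
        rw [hcard, Finset.sum_congr rfl hf_card, Finset.sum_const, smul_eq_mul, mul_comm]
    _ = (Efin.biUnion f).card := hsum
    _ ≤ S.card := Finset.card_le_card hsub
end

section
/- Let G be a triangle-free graph in which every pair of non-adjacent vertices has a unique common neighbour. A subset S ⊆ V(G) is a mutual-visibility set of G if and only if every connected component of the induced subgraph G[S] is isomorphic to K₁ or K₂ (i.e., G[S] is a disjoint union of an induced matching and isolated vertices). -/
open scoped Classical

/-!
Two distinct non-adjacent vertices `u`, `v` are at distance 2, and the shortest `u`–`v` paths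
are exactly `u - w - v` with `w` a common neighbour, here unique. So a set `S` fails to be in
mutual visibility exactly when some `w ∈ S` is a common neighbour of two distinct `u, v ∈ S`;
by triangle-freeness any two neighbours of `w` are non-adjacent, so this means that `G[S]` has a
vertex of degree at least 2. A graph of maximum degree at most 1 is precisely one whose
components are `K₁` or `K₂`.
-/

namespace SimpleGraph

section Components

variable {W : Type*} {H : SimpleGraph W}

lemma finite_and_ncard_eq_of_induce_iso_top {s : Set W} {n : ℕ}
    (e : H.induce s ≃g (⊤ : SimpleGraph (Fin n))) : s.Finite ∧ s.ncard = n :=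
  ⟨Set.finite_coe_iff.mp (Finite.of_equiv _ e.symm.toEquiv),
    (Nat.card_congr e.toEquiv).trans (Nat.card_eq_fintype_card.trans (Fintype.card_fin n))⟩

lemma nonempty_induce_iso_top_fin_ncard {s : Set W} (hs : H.IsClique s) (hfin : s.Finite) :
    Nonempty (H.induce s ≃g (⊤ : SimpleGraph (Fin s.ncard))) := by
  have := hfin.to_subtype
  rw [induce_eq_top.mpr hs]
  exact ⟨Iso.completeGraph (Finite.equivFin s)⟩

lemma neighborSet_subsingleton_of_ncard_supp_le_two
    (h : ∀ c : H.ConnectedComponent, c.supp.Finite ∧ c.supp.ncard ≤ 2) (b : W) :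
    (H.neighborSet b).Subsingleton := by
  intro a ha c hc
  by_contra hac
  obtain ⟨hfin, hcard⟩ := h (H.connectedComponentMk b)
  have hsub : {a, b, c} ⊆ (H.connectedComponentMk b).supp := by
    rintro x (rfl | rfl | rfl)
    exacts [ConnectedComponent.sound ha.symm.reachable, rfl,
      ConnectedComponent.sound hc.symm.reachable]
  have h3 := Set.ncard_le_ncard hsub hfin
  rw [Set.ncard_eq_three.mpr ⟨a, b, c, ha.ne', hac, hc.ne, rfl⟩] at h3
  omega

section MaxDegreeOne

variable (hdeg : ∀ v, (H.neighborSet v).Subsingleton)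
include hdeg

lemma supp_connectedComponentMk_subset_insert_neighborSet (v : W) :
    (H.connectedComponentMk v).supp ⊆ insert v (H.neighborSet v) := by
  suffices ∀ u, H.Reachable u v → u = v ∨ H.Adj v u from
    fun u hu => this u (ConnectedComponent.exact hu)
  rintro u ⟨p⟩
  induction p with
  | nil => exact Or.inl rfl
  | cons h _ ih =>
    rcases ih with rfl | hadj
    · exact Or.inr h.symm
    · exact Or.inl (hdeg _ h.symm hadj.symm)

lemma ConnectedComponent.isClique_supp (c : H.ConnectedComponent) : H.IsClique c.supp := by
  obtain ⟨v, rfl⟩ := c.exists_rep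
  refine (H.isClique_insert.mpr ⟨?_, fun u hu _ => hu⟩).subset
    (supp_connectedComponentMk_subset_insert_neighborSet hdeg v)
  exact fun x hx y hy hxy => absurd (hdeg v hx hy) hxy

lemma ConnectedComponent.finite_supp_and_ncard_supp_le_two (c : H.ConnectedComponent) :
    c.supp.Finite ∧ c.supp.ncard ≤ 2 := by
  obtain ⟨v, rfl⟩ := c.exists_rep
  have hsub := supp_connectedComponentMk_subset_insert_neighborSet hdeg v
  have hfin : (insert v (H.neighborSet v)).Finite := (hdeg v).finite.insert v
  refine ⟨hfin.subset hsub, (Set.ncard_le_ncard hsub hfin).trans ?_⟩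
  calc (insert v (H.neighborSet v)).ncard ≤ (H.neighborSet v).ncard + 1 :=
        Set.ncard_insert_le _ _
    _ ≤ 1 + 1 := by
      gcongr
      exact (Set.ncard_le_one (hdeg v).finite).mpr fun a ha b hb => hdeg v ha hb

end MaxDegreeOne

theorem forall_induce_supp_iso_top_fin_one_or_two_iff :
    (∀ c : H.ConnectedComponent,
        Nonempty (H.induce c.supp ≃g (⊤ : SimpleGraph (Fin 1))) ∨
        Nonempty (H.induce c.supp ≃g (⊤ : SimpleGraph (Fin 2)))) ↔
      ∀ v, (H.neighborSet v).Subsingleton := by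
  constructor
  · refine fun h => neighborSet_subsingleton_of_ncard_supp_le_two fun c => ?_
    obtain ⟨⟨e⟩⟩ | ⟨⟨e⟩⟩ := h c <;>
      exact (finite_and_ncard_eq_of_induce_iso_top e).imp_right fun h => by omega
  · intro hdeg c
    obtain ⟨hfin, hcard⟩ := c.finite_supp_and_ncard_supp_le_two hdeg
    have hpos : 0 < c.supp.ncard := (Set.ncard_pos hfin).mpr c.nonempty_supp
    obtain ⟨e⟩ := nonempty_induce_iso_top_fin_ncard (c.isClique_supp hdeg) hfin
    obtain h | h : c.supp.ncard = 1 ∨ c.supp.ncard = 2 := by omega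
    · exact .inl ⟨h ▸ e⟩
    · exact .inr ⟨h ▸ e⟩

end Components

section MutualVisibility

variable {V : Type*} {G : SimpleGraph V} {S : Set V}

lemma dist_eq_two_of_mem_commonNeighbors {u v w : V} (hne : u ≠ v) (hnadj : ¬G.Adj u v)
    (hw : w ∈ G.commonNeighbors u v) : G.dist u v = 2 := by
  simp [dist, edist_eq_two_iff.mpr ⟨hne, hnadj, w, hw⟩]

lemma MutualVisibilitySet.induce_neighborSet_subsingleton (htf : G.CliqueFree 3)
    (huniq : ∀ u v, u ≠ v → ¬G.Adj u v → (G.commonNeighbors u v).Subsingleton)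
    (hS : G.MutualVisibilitySet S) (b : S) : ((G.induce S).neighborSet b).Subsingleton := by
  obtain ⟨b, hbS⟩ := b
  rintro ⟨a, ha⟩ hab ⟨c, hc⟩ hcb
  simp only [mem_neighborSet, comap_adj, Function.Embedding.coe_subtype] at hab hcb
  by_contra hac
  replace hac : a ≠ c := fun h => hac (Subtype.ext h)
  have hnadj : ¬G.Adj a c := fun h => htf {b, a, c} (is3Clique_triple_iff.2 ⟨hab, hcb, h⟩)
  have hb : b ∈ G.commonNeighbors a c := G.mem_commonNeighbors.2 ⟨hab.symm, hcb.symm⟩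
  obtain ⟨p, hp, hpS⟩ := hS a ha c hc
  rw [dist_eq_two_of_mem_commonNeighbors hac hnadj hb] at hp
  have hsnd : p.snd ∈ G.commonNeighbors a c :=
    (G.walkLengthTwoEquivCommonNeighbors a c ⟨p, hp⟩).2
  have hb_mem : b ∈ p.support := huniq a c hac hnadj hsnd hb ▸ p.getVert_mem_support 1
  rcases hpS b hb_mem hbS with h | h
  · exact hab.ne h
  · exact hcb.ne h

lemma mutualVisibilitySet_of_induce_neighborSet_subsingleton
    (hex : ∀ u v, u ≠ v → ¬G.Adj u v → (G.commonNeighbors u v).Nonempty)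
    (hdeg : ∀ v, ((G.induce S).neighborSet v).Subsingleton) : G.MutualVisibilitySet S := by
  intro u hu v hv
  by_cases huv : u = v
  · subst huv
    exact ⟨.nil, by simp, by simp⟩
  by_cases hadj : G.Adj u v
  · exact ⟨hadj.toWalk, by simp [dist_eq_one_iff_adj.mpr hadj], by simp⟩
  obtain ⟨w, hw⟩ := hex u v huv hadj
  obtain ⟨huw, hvw⟩ := G.mem_commonNeighbors.1 hw
  refine ⟨.cons huw (.cons hvw.symm .nil),
    by simp [dist_eq_two_of_mem_commonNeighbors huv hadj hw], ?_⟩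
  simp only [Walk.support_cons, Walk.support_nil, List.mem_cons, List.not_mem_nil, or_false]
  rintro x (rfl | rfl | rfl) hx
  · exact .inl rfl
  · have := hdeg ⟨x, hx⟩ (show ⟨u, hu⟩ ∈ _ from huw.symm) (show ⟨v, hv⟩ ∈ _ from hvw.symm)
    exact absurd (congrArg Subtype.val this) huv
  · exact .inr rfl

end MutualVisibility

end SimpleGraph

theorem stmt7_general {V : Type*} (G : SimpleGraph V)
    (htf : G.CliqueFree 3)
    (huniq : ∀ u v : V, u ≠ v → ¬ G.Adj u v → ∃! w, G.Adj u w ∧ G.Adj w v)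
    (S : Set V) :
    G.MutualVisibilitySet S ↔
      ∀ c : (G.induce S).ConnectedComponent,
        Nonempty ((G.induce S).induce c.supp ≃g (⊤ : SimpleGraph (Fin 1))) ∨
        Nonempty ((G.induce S).induce c.supp ≃g (⊤ : SimpleGraph (Fin 2))) := by
  have hsub : ∀ u v, u ≠ v → ¬G.Adj u v → (G.commonNeighbors u v).Subsingleton := by
    intro u v huv hadj x hx y hy
    rw [SimpleGraph.mem_commonNeighbors] at hx hy
    exact (huniq u v huv hadj).unique ⟨hx.1, hx.2.symm⟩ ⟨hy.1, hy.2.symm⟩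
  have hex : ∀ u v, u ≠ v → ¬G.Adj u v → (G.commonNeighbors u v).Nonempty := by
    intro u v huv hadj
    obtain ⟨w, ⟨huw, hwv⟩, -⟩ := huniq u v huv hadj
    exact ⟨w, huw, hwv.symm⟩
  rw [SimpleGraph.forall_induce_supp_iso_top_fin_one_or_two_iff]
  exact ⟨fun hS => hS.induce_neighborSet_subsingleton htf hsub,
    SimpleGraph.mutualVisibilitySet_of_induce_neighborSet_subsingleton hex⟩

theorem stmt7 {V : Type*} [Fintype V] (G : SimpleGraph V)
    (htf : G.CliqueFree 3)
    (huniq : ∀ u v : V, u ≠ v → ¬ G.Adj u v → ∃! w, G.Adj u w ∧ G.Adj w v)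
    (S : Set V) :
    G.MutualVisibilitySet S ↔
      ∀ c : (G.induce S).ConnectedComponent,
        Nonempty ((G.induce S).induce c.supp ≃g (⊤ : SimpleGraph (Fin 1))) ∨
        Nonempty ((G.induce S).induce c.supp ≃g (⊤ : SimpleGraph (Fin 2))) :=
  stmt7_general G htf huniq S
end

section
/- Let G be a triangle-free d-regular graph on n vertices with d ≥ 3, in which every pair of non-adjacent vertices has a unique common neighbour. If S is a mutual-visibility set of size s, then s² + 4s − d(d−1)n ≤ 0, and consequently s ≤ ⌊−2 + √(4 + d(d−1)n)⌋. -/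
open scoped Classical

-- the unique common neighbour of a non-adjacent pair in a mutual visibility set
-- is outside the set
lemma common_not_mem {V : Type*} [Fintype V] (G : SimpleGraph V) [DecidableRel G.Adj]
    (huniq : ∀ u v : V, u ≠ v → ¬ G.Adj u v → ∃! w, G.Adj u w ∧ G.Adj w v)
    (S : Finset V) (hS : G.MutualVisibilitySet ↑S)
    {u v : V} (hu : u ∈ S) (hv : v ∈ S) (hne : u ≠ v) (hnadj : ¬ G.Adj u v)
    {w : V} (hw1 : G.Adj u w) (hw2 : G.Adj w v) : w ∉ S := by
  intro hwS
  obtain ⟨p, hp, hsup⟩ := hS u hu v hv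
  have hq : G.dist u v ≤ 2 := by
    have := G.dist_le (SimpleGraph.Walk.cons hw1 (SimpleGraph.Walk.cons hw2 SimpleGraph.Walk.nil))
    simpa using this
  have hlen : p.length = 2 := by
    have h0 : p.length ≠ 0 := fun h => hne (SimpleGraph.Walk.eq_of_length_eq_zero h)
    have h1 : p.length ≠ 1 := fun h => hnadj (SimpleGraph.Walk.adj_of_length_eq_one h)
    omega
  set x := p.getVert 1 with hx
  have hux : G.Adj u x := by
    have := p.adj_getVert_succ (i := 0) (by omega)
    simpa [SimpleGraph.Walk.getVert_zero] using this
  have hxv : G.Adj x v := by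
    have := p.adj_getVert_succ (i := 1) (by omega)
    have h2 : p.getVert 2 = v := by
      rw [show (2 : ℕ) = p.length from hlen.symm, SimpleGraph.Walk.getVert_length]
    rwa [h2] at this
  have hxsup : x ∈ p.support := by
    rw [SimpleGraph.Walk.mem_support_iff_exists_getVert]
    exact ⟨1, rfl, by omega⟩
  have hxw : x = w := by
    obtain ⟨c, _, hcu⟩ := huniq u v hne hnadj
    rw [hcu x ⟨hux, hxv⟩, hcu w ⟨hw1, hw2⟩]
  rcases hsup x hxsup (by rw [hxw]; exact hwS) with h | h
  · exact hux.ne h.symm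
  · exact hxv.ne h

-- every vertex of S has at most one neighbour in S
lemma one_nbr {V : Type*} [Fintype V] (G : SimpleGraph V) [DecidableRel G.Adj]
    (htf : G.CliqueFree 3)
    (huniq : ∀ u v : V, u ≠ v → ¬ G.Adj u v → ∃! w, G.Adj u w ∧ G.Adj w v)
    (S : Finset V) (hS : G.MutualVisibilitySet ↑S)
    {u v v' : V} (hu : u ∈ S) (hv : v ∈ S) (hv' : v' ∈ S)
    (h1 : G.Adj u v) (h2 : G.Adj u v') : v = v' := by
  by_contra hne
  have hnadj : ¬ G.Adj v v' := by
    intro hadj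
    exact htf {u, v, v'} (SimpleGraph.is3Clique_triple_iff.mpr ⟨h1, h2, hadj⟩)
  exact common_not_mem G huniq S hS hv hv' hne hnadj h1.symm h2 hu

theorem stmt8 {V : Type*} [Fintype V] (G : SimpleGraph V) [DecidableRel G.Adj]
    (d n : ℕ) (hd : 3 ≤ d) (hn : Fintype.card V = n)
    (hreg : G.IsRegularOfDegree d) (htf : G.CliqueFree 3)
    (huniq : ∀ u v : V, u ≠ v → ¬ G.Adj u v → ∃! w, G.Adj u w ∧ G.Adj w v)
    (S : Finset V) (hS : G.MutualVisibilitySet ↑S) (s : ℕ) (hs : S.card = s) :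
    (s : ℤ) ^ 2 + 4 * s - d * (d - 1) * n ≤ 0 ∧
      (s : ℤ) ≤ ⌊(-2 + Real.sqrt (4 + d * (d - 1) * n) : ℝ)⌋ := by
  classical
  -- adjacent and non-adjacent off-diagonal pairs in S
  set A : Finset (V × V) := S.offDiag.filter (fun p => G.Adj p.1 p.2) with hA
  set P : Finset (V × V) := S.offDiag.filter (fun p => ¬ G.Adj p.1 p.2) with hP
  have hsplit : A.card + P.card = s * s - s := by
    rw [hA, hP, Finset.card_filter_add_card_filter_not, Finset.offDiag_card, hs]
  -- |A| ≤ s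
  have hAcard : A.card ≤ s := by
    rw [← hs]
    apply Finset.card_le_card_of_injOn Prod.fst
    · intro p hp
      exact (Finset.mem_offDiag.1 (Finset.mem_filter.1 hp).1).1
    · intro p hp q hq hfst
      have hp' := Finset.mem_filter.1 hp
      have hq' := Finset.mem_filter.1 hq
      have hp1 := Finset.mem_offDiag.1 hp'.1
      have hq1 := Finset.mem_offDiag.1 hq'.1
      have : p.2 = q.2 := by
        apply one_nbr G htf huniq S hS hp1.1 hp1.2.1 hq1.2.1 hp'.2
        rw [hfst]; exact hq'.2
      exact Prod.ext hfst this
  -- map each non-adjacent pair to its unique common neighbour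
  set g : V × V → V := fun p =>
    if h : p.1 ≠ p.2 ∧ ¬ G.Adj p.1 p.2 then (huniq p.1 p.2 h.1 h.2).exists.choose
    else p.1 with hg
  have hgP : ∀ p ∈ P, G.Adj p.1 (g p) ∧ G.Adj (g p) p.2 ∧ g p ∉ S := by
    intro p hp
    have hp' := Finset.mem_filter.1 hp
    have hp1 := Finset.mem_offDiag.1 hp'.1
    have hcond : p.1 ≠ p.2 ∧ ¬ G.Adj p.1 p.2 := ⟨hp1.2.2, hp'.2⟩
    have hval : g p = (huniq p.1 p.2 hcond.1 hcond.2).exists.choose := by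
      rw [hg]; simp only [dif_pos hcond]
    have hspec := (huniq p.1 p.2 hcond.1 hcond.2).exists.choose_spec
    rw [hval]
    exact ⟨hspec.1, hspec.2,
      common_not_mem G huniq S hS hp1.1 hp1.2.1 hcond.1 hcond.2 hspec.1 hspec.2⟩
  have hPcard : P.card ≤ (n - s) * (d * d - d) := by
    have hfib : P.card = ∑ w ∈ Sᶜ, (P.filter (fun p => g p = w)).card := by
      apply Finset.card_eq_sum_card_fiberwise
      intro p hp
      simpa using (hgP p hp).2.2
    rw [hfib]
    have hbound : ∀ w ∈ Sᶜ, (P.filter (fun p => g p = w)).card ≤ d * d - d := by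
      intro w _
      have hsub : P.filter (fun p => g p = w) ⊆ (G.neighborFinset w).offDiag := by
        intro p hp
        obtain ⟨hpP, hgw⟩ := Finset.mem_filter.1 hp
        obtain ⟨h1, h2, _⟩ := hgP p hpP
        rw [hgw] at h1 h2
        have hp1 := Finset.mem_offDiag.1 (Finset.mem_filter.1 hpP).1
        exact Finset.mem_offDiag.2 ⟨by simpa using h1.symm, by simpa using h2, hp1.2.2⟩
      calc (P.filter (fun p => g p = w)).card ≤ (G.neighborFinset w).offDiag.card :=
            Finset.card_le_card hsub
        _ = d * d - d := by
            rw [Finset.offDiag_card, G.card_neighborFinset_eq_degree, hreg w]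
    calc ∑ w ∈ Sᶜ, (P.filter (fun p => g p = w)).card ≤ ∑ _w ∈ Sᶜ, (d * d - d) :=
          Finset.sum_le_sum hbound
      _ = (n - s) * (d * d - d) := by
          rw [Finset.sum_const, smul_eq_mul, Finset.card_compl, hn, hs]
  -- assemble the counting inequality over ℤ
  have hsn : s ≤ n := by rw [← hs, ← hn]; exact Finset.card_le_univ S
  have hdd : d ≥ 3 := hd
  have key : (s : ℤ) * s - s ≤ s + ((n : ℤ) - s) * ((d : ℤ) * d - d) := by
    have h1 : s * s - s ≤ s + (n - s) * (d * d - d) := by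
      rw [← hsplit]; exact Nat.add_le_add hAcard hPcard
    have hss : s ≤ s * s := by nlinarith
    have hddn : d ≤ d * d := by nlinarith
    zify [hsn, hss, hddn] at h1
    linarith
  have hd' : (3 : ℤ) ≤ d := by exact_mod_cast hd
  have hsnz : (s : ℤ) ≤ n := by exact_mod_cast hsn
  have part1 : (s : ℤ) ^ 2 + 4 * s - d * (d - 1) * n ≤ 0 := by
    nlinarith [key, mul_nonneg (show (0:ℤ) ≤ (s:ℤ) by positivity)
      (show (0:ℤ) ≤ (d : ℤ) * d - d - 6 by nlinarith), sq_nonneg ((s:ℤ))]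
  refine ⟨part1, ?_⟩
  have hM : ((s : ℝ) + 2) ^ 2 ≤ 4 + (d : ℝ) * ((d : ℝ) - 1) * n := by
    have := part1
    have h : ((s : ℤ) ^ 2 + 4 * s - d * (d - 1) * n : ℝ) ≤ 0 := by exact_mod_cast part1
    push_cast at h
    nlinarith [h]
  have hsqrt : (s : ℝ) + 2 ≤ Real.sqrt (4 + (d : ℝ) * ((d : ℝ) - 1) * n) := by
    have h := Real.sqrt_le_sqrt hM
    rwa [Real.sqrt_sq (by positivity)] at h
  rw [Int.le_floor]
  push_cast
  linarith
end

section
/- A subset S of the vertices of the Petersen graph is a mutual-visibility set if and only if the induced subgraph on S has maximum degree at most 1. -/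
open scoped Classical

abbrev PV := {s : Finset (Fin 5) // s.card = 2}

def Petersen : SimpleGraph PV where
  Adj a b := Disjoint a.1 b.1
  symm := ⟨fun a b h => h.symm⟩
  loopless := by
    constructor
    intro a h
    have h0 : a.1 = ⊥ := disjoint_self.mp h
    have h2 := a.2
    rw [h0] at h2
    simp at h2

/-!
In a triangle-free graph in which any two distinct non-adjacent vertices have exactly one common
neighbour, the shortest paths are the edges and the paths `u - w - v` through the common
neighbour `w` of `u` and `v`. So `S` is a mutual-visibility set iff no vertex of `S` is the
common neighbour of two vertices of `S`; since two neighbours of a vertex are never adjacent, this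
means that no vertex of `S` has two neighbours in `S`. The Petersen graph has both properties.
-/

namespace SimpleGraph

variable {V : Type*} {G : SimpleGraph V}

theorem dist_eq_two_iff {u v : V} :
    G.dist u v = 2 ↔ u ≠ v ∧ ¬G.Adj u v ∧ (G.commonNeighbors u v).Nonempty := by
  rw [dist, ENat.toNat_eq_iff two_ne_zero, Nat.cast_ofNat, edist_eq_two_iff]

theorem Walk.exists_support_eq_of_length_eq_two {u v : V} (p : G.Walk u v) (h : p.length = 2) :
    ∃ w ∈ G.commonNeighbors u v, p.support = [u, w, v] := by
  match p, h with
  | .cons huw (.cons hwv .nil), _ => exact ⟨_, ⟨huw, hwv.symm⟩, rfl⟩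

theorem MutualVisibilitySet.subsingleton_neighbors (h3 : G.CliqueFree 3)
    (hμ : ∀ u v, u ≠ v → ¬G.Adj u v → (G.commonNeighbors u v).Subsingleton)
    {S : Set V} (hS : G.MutualVisibilitySet S) {v : V} (hv : v ∈ S) :
    {u ∈ S | G.Adj v u}.Subsingleton := by
  rintro a ⟨ha, hva⟩ b ⟨hb, hvb⟩
  by_contra hab
  have hnab : ¬G.Adj a b := G.isIndepSet_neighborSet_of_triangleFree h3 v hva hvb hab
  have hv_common : v ∈ G.commonNeighbors a b := ⟨hva.symm, hvb.symm⟩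
  obtain ⟨p, hp, hpS⟩ := hS a ha b hb
  rw [dist_eq_two_iff.mpr ⟨hab, hnab, v, hv_common⟩] at hp
  obtain ⟨w, hw, hsupp⟩ := p.exists_support_eq_of_length_eq_two hp
  have hvw : v = w := hμ a b hab hnab hv_common hw
  rcases hpS v (by simp [hsupp, hvw]) hv with h | h
  exacts [hva.ne h, hvb.ne h]

theorem mutualVisibilitySet_of_subsingleton_neighbors
    (hμ : ∀ u v, u ≠ v → ¬G.Adj u v → (G.commonNeighbors u v).Nonempty) {S : Set V}
    (hS : ∀ v ∈ S, {u ∈ S | G.Adj v u}.Subsingleton) : G.MutualVisibilitySet S := by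
  intro u hu v hv
  by_cases huv : u = v
  · subst huv
    exact ⟨.nil, by simp, by simp⟩
  by_cases hadj : G.Adj u v
  · exact ⟨hadj.toWalk, by simp [dist_eq_one_iff_adj.mpr hadj], by simp⟩
  obtain ⟨w, hw⟩ := hμ u v huv hadj
  obtain ⟨huw, hvw⟩ := G.mem_commonNeighbors.mp hw
  have hwS : w ∉ S := fun hwS => huv (hS w hwS ⟨hu, huw.symm⟩ ⟨hv, hvw.symm⟩)
  refine ⟨.cons huw (.cons hvw.symm .nil), ?_, ?_⟩
  · simp [dist_eq_two_iff.mpr ⟨huv, hadj, w, hw⟩]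
  · rintro x hx hxS
    simp only [Walk.support_cons, Walk.support_nil, List.mem_cons, List.not_mem_nil,
      or_false] at hx
    rcases hx with rfl | rfl | rfl
    exacts [.inl rfl, absurd hxS hwS, .inr rfl]

theorem mutualVisibilitySet_iff_forall_subsingleton_neighbors (h3 : G.CliqueFree 3)
    (hμ : ∀ u v, u ≠ v → ¬G.Adj u v → ∃! w, w ∈ G.commonNeighbors u v) {S : Set V} :
    G.MutualVisibilitySet S ↔ ∀ v ∈ S, {u ∈ S | G.Adj v u}.Subsingleton :=
  ⟨fun hS _ hv => hS.subsingleton_neighbors h3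
      (fun u v huv hadj _ hx _ hy => (hμ u v huv hadj).unique hx hy) hv,
    mutualVisibilitySet_of_subsingleton_neighbors fun u v huv hadj => (hμ u v huv hadj).exists⟩

end SimpleGraph

open SimpleGraph

instance : DecidableRel Petersen.Adj := fun a b => inferInstanceAs (Decidable (Disjoint a.1 b.1))

theorem petersen_cliqueFree_three : Petersen.CliqueFree 3 := by
  have : ∀ a b c : PV, Petersen.Adj a b → Petersen.Adj a c → ¬Petersen.Adj b c := by decide
  intro s hs
  obtain ⟨a, b, c, hab, hac, hbc, -⟩ := is3Clique_iff.mp hs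
  exact this a b c hab hac hbc

theorem petersen_existsUnique_commonNeighbor (u v : PV) (huv : u ≠ v) (hadj : ¬Petersen.Adj u v) :
    ∃! w, w ∈ Petersen.commonNeighbors u v := by
  have hex : ∀ u v : PV, u ≠ v → ¬Petersen.Adj u v →
      ∃ w, Petersen.Adj u w ∧ Petersen.Adj v w := by decide
  have huniq : ∀ u v : PV, u ≠ v → ¬Petersen.Adj u v → ∀ w w',
      Petersen.Adj u w → Petersen.Adj v w → Petersen.Adj u w' → Petersen.Adj v w' → w = w' := by
    decide
  obtain ⟨w, hw⟩ := hex u v huv hadj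
  exact ⟨w, hw, fun w' hw' => huniq u v huv hadj w' w hw'.1 hw'.2 hw.1 hw.2⟩

theorem stmt11 (S : Set PV) :
    Petersen.MutualVisibilitySet S ↔ ∀ v ∈ S, {u ∈ S | Petersen.Adj v u}.ncard ≤ 1 := by
  simp only [Set.ncard_le_one_iff_subsingleton]
  exact mutualVisibilitySet_iff_forall_subsingleton_neighbors petersen_cliqueFree_three
    petersen_existsUnique_commonNeighbor
end

section
/- Let H be the Hoffman–Singleton graph, i.e., a 7-regular triangle-free graph on 50 vertices in which every two non-adjacent vertices have exactly one common neighbour. Then every mutual-visibility set of H has size at most 26. -/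
open scoped Classical

theorem stmt17 {V : Type*} [Fintype V] (G : SimpleGraph V) [DecidableRel G.Adj]
    (hcard : Fintype.card V = 50) (hreg : G.IsRegularOfDegree 7)
    (htf : G.CliqueFree 3)
    (huniq : ∀ u v : V, u ≠ v → ¬ G.Adj u v → ∃! w, G.Adj u w ∧ G.Adj w v)
    (S : Finset V) (hS : G.MutualVisibilitySet ↑S) : S.card ≤ 26 := by
  classical
  -- Step 1: every vertex of S has at most one neighbour in S
  have hdeg : ∀ s ∈ S, (S.filter (G.Adj s)).card ≤ 1 := by
    intro s hs
    by_contra h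
    push_neg at h
    obtain ⟨v, hv, w, hw, hvw⟩ := Finset.one_lt_card.mp h
    rw [Finset.mem_filter] at hv hw
    obtain ⟨hvS, hsv⟩ := hv
    obtain ⟨hwS, hsw⟩ := hw
    have hnadj : ¬ G.Adj v w := by
      intro hadj
      exact htf {s, v, w} (SimpleGraph.is3Clique_triple_iff.mpr ⟨hsv, hsw, hadj⟩)
    have hdle : G.dist v w ≤ 2 := by
      have := SimpleGraph.dist_le (SimpleGraph.Walk.cons hsv.symm
        (SimpleGraph.Walk.cons hsw SimpleGraph.Walk.nil))
      simpa using this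
    obtain ⟨p, hlen, hint⟩ := hS v (by exact_mod_cast hvS) w (by exact_mod_cast hwS)
    cases p with
    | nil => exact hvw rfl
    | cons h q =>
      cases q with
      | nil => exact hnadj h
      | cons h' q' =>
        rename_i x y
        have hq0 : q'.length = 0 := by
          have hple : (SimpleGraph.Walk.cons h (SimpleGraph.Walk.cons h' q')).length ≤ 2 := by
            rw [hlen]; exact hdle
          simp only [SimpleGraph.Walk.length_cons] at hple
          omega
        have hxy : y = w := SimpleGraph.Walk.eq_of_length_eq_zero (p := q') hq0
        have h'' : G.Adj x w := hxy ▸ h'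
        -- h : G.Adj v y, h' : G.Adj y w? check rename order below
        obtain ⟨u0, hu0, huniq'⟩ := huniq v w hvw hnadj
        have hy_eq : x = u0 := huniq' x ⟨h, h''⟩
        have hs_eq : s = u0 := huniq' s ⟨hsv.symm, hsw⟩
        have hyS : x ∈ (S : Set V) := by
          rw [hy_eq, ← hs_eq]; exact_mod_cast hs
        have hysup : x ∈ (SimpleGraph.Walk.cons h (SimpleGraph.Walk.cons h' q')).support := by
          simp
        rcases hint x hysup hyS with h1 | h1
        · exact G.irrefl (h1 ▸ h)
        · exact G.irrefl (h1 ▸ h'')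
  -- regular degree as a filter over univ
  have hdegfull : ∀ s : V, (Finset.univ.filter (G.Adj s)).card = 7 := by
    intro s
    have := hreg s
    rwa [SimpleGraph.degree, SimpleGraph.neighborFinset_eq_filter] at this
  -- split neighbours into S and Sᶜ
  have hsplit : ∀ s : V, (S.filter (G.Adj s)).card + (Sᶜ.filter (G.Adj s)).card = 7 := by
    intro s
    rw [← hdegfull s]
    rw [← Finset.card_union_of_disjoint]
    · congr 1
      rw [← Finset.filter_union, Finset.union_compl]
    · exact Finset.disjoint_filter_filter disjoint_compl_right
  have h1 : ∀ s ∈ S, 6 ≤ (Sᶜ.filter (G.Adj s)).card := by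
    intro s hs
    have := hsplit s
    have := hdeg s hs
    omega
  -- double counting
  have hsum1 : 6 * S.card ≤ ∑ s ∈ S, (Sᶜ.filter (G.Adj s)).card := by
    calc 6 * S.card = ∑ _s ∈ S, 6 := by rw [Finset.sum_const]; ring
    _ ≤ _ := Finset.sum_le_sum h1
  have hswap : ∑ s ∈ S, (Sᶜ.filter (G.Adj s)).card
      = ∑ t ∈ Sᶜ, (S.filter (fun s => G.Adj s t)).card := by
    simp only [Finset.card_filter]
    rw [Finset.sum_comm]
  have hsum2 : ∑ t ∈ Sᶜ, (S.filter (fun s => G.Adj s t)).card ≤ 7 * (50 - S.card) := by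
    have hb : ∀ t ∈ Sᶜ, (S.filter (fun s => G.Adj s t)).card ≤ 7 := by
      intro t _
      calc (S.filter (fun s => G.Adj s t)).card
          ≤ (Finset.univ.filter (G.Adj t)).card := by
            apply Finset.card_le_card
            intro s hs
            rw [Finset.mem_filter] at *
            exact ⟨Finset.mem_univ s, hs.2.symm⟩
      _ = 7 := hdegfull t
    calc ∑ t ∈ Sᶜ, (S.filter (fun s => G.Adj s t)).card
        ≤ ∑ _t ∈ Sᶜ, 7 := Finset.sum_le_sum hb
    _ = 7 * (50 - S.card) := by
        rw [Finset.sum_const, Finset.card_compl, hcard]; ring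
  have hle : S.card ≤ 50 := by
    calc S.card ≤ Fintype.card V := Finset.card_le_univ S
    _ = 50 := hcard
  omega
end

section
/- Let H be the Hoffman–Singleton graph (the unique srg(50,7,0,1)). Then the mutual-visibility number μ(H) ≤ 20. Moreover, if S is a mutual-visibility set of size 20, then H[S] is an induced matching of ten disjoint edges and every vertex outside S has exactly four neighbours in S. -/
open scoped Classical

/-!
Let `f t` be the number of neighbours of `t` in a mutual-visibility set `S`. Two non-adjacent
vertices of `S` are at distance 2, so their unique common neighbour lies outside `S`; hence every
vertex of `S` has at most one neighbour in `S`, i.e. `E := ∑ u ∈ S, f u ≤ |S|`. Double counting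
gives `∑ t, f t = 7|S|` and `∑ t, f t ^ 2 = |S|² + 6|S| - E`, which combine to
`∑ t ∉ S, (f t - 4)² + 6 (|S| - E) = (|S| - 20)(|S| - 40)`.
A 21-element subset of a larger mutual-visibility set would make the right side negative, and
for `|S| = 20` both terms on the left vanish.
-/

open Finset

namespace SimpleGraph

def degreeIn {V : Type*} (G : SimpleGraph V) [DecidableRel G.Adj] (S : Finset V) (t : V) : ℕ :=
  #{u ∈ S | G.Adj t u}

variable {V : Type*} {G : SimpleGraph V}

lemma CliqueFree.not_adj_of_adj_of_adj (htf : G.CliqueFree 3) {a b c : V}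
    (hab : G.Adj a b) (hbc : G.Adj b c) : ¬ G.Adj a c := fun hac =>
  htf {a, b, c} (is3Clique_triple_iff.2 ⟨hab, hac, hbc⟩)

lemma dist_eq_two_of_adj_of_adj {u v w : V} (hne : u ≠ v) (hnadj : ¬ G.Adj u v)
    (huw : G.Adj u w) (hwv : G.Adj w v) : G.dist u v = 2 := by
  have hedist : G.edist u v = 2 :=
    edist_eq_two_iff.2 ⟨hne, hnadj, w, (G.mem_commonNeighbors).2 ⟨huw, hwv.symm⟩⟩
  simp [dist, hedist]

namespace MutualVisibilitySet

variable {S T : Set V}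

lemma mono (hS : G.MutualVisibilitySet S) (hTS : T ⊆ S) : G.MutualVisibilitySet T := by
  intro u hu v hv
  obtain ⟨p, hlen, hint⟩ := hS u (hTS hu) v (hTS hv)
  exact ⟨p, hlen, fun w hw hwT => hint w hw (hTS hwT)⟩

lemma exists_adj_adj_notMem (hS : G.MutualVisibilitySet S) {u v : V} (hu : u ∈ S) (hv : v ∈ S)
    (huv : G.dist u v = 2) : ∃ w ∉ S, G.Adj u w ∧ G.Adj w v := by
  obtain ⟨p, hlen, hint⟩ := hS u hu v hv
  rw [huv] at hlen
  have huw : G.Adj u (p.getVert 1) := by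
    simpa [p.getVert_zero] using p.adj_getVert_succ (i := 0) (by omega)
  have hwv : G.Adj (p.getVert 1) v := by
    simpa [← hlen, p.getVert_length] using p.adj_getVert_succ (i := 1) (by omega)
  refine ⟨p.getVert 1, fun hw => ?_, huw, hwv⟩
  rcases hint _ (p.getVert_mem_support 1) hw with h | h
  · exact huw.ne h.symm
  · exact hwv.ne h

lemma notMem_of_adj_of_adj (hS : G.MutualVisibilitySet S) {u v w : V} (hu : u ∈ S) (hv : v ∈ S)
    (hne : u ≠ v) (hnadj : ¬ G.Adj u v) (huw : G.Adj u w) (hwv : G.Adj w v)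
    (hunique : ∀ x, G.Adj u x → G.Adj x v → x = w) : w ∉ S := by
  obtain ⟨x, hx, hux, hxv⟩ :=
    hS.exists_adj_adj_notMem hu hv (dist_eq_two_of_adj_of_adj hne hnadj huw hwv)
  exact hunique x hux hxv ▸ hx

end MutualVisibilitySet

section Counting

variable [DecidableRel G.Adj] {S : Finset V}

lemma ncard_setOf_mem_adj (t : V) :
    {u ∈ (S : Set V) | G.Adj t u}.ncard = G.degreeIn S t := by
  rw [degreeIn, ← Set.ncard_coe_finset, coe_filter]
  rfl

lemma MutualVisibilitySet.degreeIn_le_one (hS : G.MutualVisibilitySet ↑S) (htf : G.CliqueFree 3)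
    (huniq : ∀ u v : V, u ≠ v → ¬ G.Adj u v → ∃! w, G.Adj u w ∧ G.Adj w v) {u : V}
    (hu : u ∈ S) : G.degreeIn S u ≤ 1 := by
  by_contra! h
  obtain ⟨a, ha, b, hb, hab⟩ := one_lt_card.1 h
  rw [mem_filter] at ha hb
  have hnadj : ¬ G.Adj a b := htf.not_adj_of_adj_of_adj ha.2.symm hb.2
  obtain ⟨w, -, hw⟩ := huniq a b hab hnadj
  refine hS.notMem_of_adj_of_adj ha.1 hb.1 hab hnadj ha.2.symm hb.2 (fun x hax hxb => ?_) hu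
  rw [hw x ⟨hax, hxb⟩, hw u ⟨ha.2.symm, hb.2⟩]

lemma MutualVisibilitySet.sum_degreeIn_le_card (hS : G.MutualVisibilitySet ↑S)
    (htf : G.CliqueFree 3)
    (huniq : ∀ u v : V, u ≠ v → ¬ G.Adj u v → ∃! w, G.Adj u w ∧ G.Adj w v) :
    ∑ u ∈ S, G.degreeIn S u ≤ #S := by
  simpa using sum_le_card_nsmul S _ 1 fun u hu => hS.degreeIn_le_one htf huniq hu

variable [Fintype V]

lemma sum_degreeIn : ∑ t, G.degreeIn S t = ∑ u ∈ S, G.degree u := by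
  have := sum_card_bipartiteAbove_eq_sum_card_bipartiteBelow (s := univ) (t := S) G.Adj
  simp_rw [← card_neighborFinset_eq_degree, neighborFinset_eq_filter]
  simpa [degreeIn, bipartiteAbove, bipartiteBelow, adj_comm] using this

lemma sum_degreeIn_sq :
    ∑ t, G.degreeIn S t ^ 2 = ∑ u ∈ S, ∑ v ∈ S, #{t | G.Adj t u ∧ G.Adj t v} := by
  simp_rw [degreeIn, sq, card_filter, sum_mul_sum]
  rw [Finset.sum_comm]
  refine sum_congr rfl fun u _ => ?_
  rw [Finset.sum_comm]
  simp only [ite_zero_mul_ite_zero, mul_one]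

lemma card_adj_adj_eq {k : ℕ} (hreg : G.IsRegularOfDegree k) (htf : G.CliqueFree 3)
    (huniq : ∀ u v : V, u ≠ v → ¬ G.Adj u v → ∃! w, G.Adj u w ∧ G.Adj w v) (u v : V) :
    #{t | G.Adj t u ∧ G.Adj t v} = if u = v then k else if G.Adj u v then 0 else 1 := by
  split_ifs with huv hadj
  · subst huv
    simp_rw [and_self, ← hreg u, ← card_neighborFinset_eq_degree, neighborFinset_eq_filter,
      adj_comm]
  · rw [card_eq_zero, filter_eq_empty_iff]
    exact fun t _ ⟨htu, htv⟩ => htf.not_adj_of_adj_of_adj htu.symm htv hadj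
  · obtain ⟨w, ⟨huw, hwv⟩, hw⟩ := huniq u v huv hadj
    refine card_eq_one.2 ⟨w, ext fun t => ?_⟩
    simp only [mem_filter, mem_univ, true_and, mem_singleton]
    exact ⟨fun h => hw t ⟨h.1.symm, h.2⟩, fun h => h ▸ ⟨huw.symm, hwv⟩⟩

lemma sum_degreeIn_sq_eq {k : ℕ} (hreg : G.IsRegularOfDegree k) (htf : G.CliqueFree 3)
    (huniq : ∀ u v : V, u ≠ v → ¬ G.Adj u v → ∃! w, G.Adj u w ∧ G.Adj w v) :
    (∑ t, G.degreeIn S t ^ 2 : ℤ) = #S ^ 2 + ((k : ℤ) - 1) * #S - ∑ u ∈ S, G.degreeIn S u := by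
  have hpt (u v : V) : ((if u = v then k else if G.Adj u v then 0 else 1 : ℕ) : ℤ)
      = 1 - (if G.Adj u v then 1 else 0 : ℤ) + ((k : ℤ) - 1) * (if u = v then 1 else 0 : ℤ) := by
    split_ifs with h1 h2 <;> simp_all
  have hsq : (∑ t, G.degreeIn S t ^ 2 : ℤ)
      = ∑ u ∈ S, ∑ v ∈ S, (#{t | G.Adj t u ∧ G.Adj t v} : ℤ) := by
    exact_mod_cast sum_degreeIn_sq
  rw [hsq]
  simp only [card_adj_adj_eq hreg htf huniq, hpt, degreeIn, sum_add_distrib, sum_sub_distrib,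
    ← mul_sum, sum_ite_eq, sum_ite_mem, inter_self, sum_const, nsmul_eq_mul, mul_one]
  push_cast [natCast_card_filter]
  ring

lemma two_mul_edgesWithin : 2 * edgesWithin G ↑S = ∑ u ∈ S, G.degreeIn S u := by
  set H := fromEdgeSet {e ∈ G.edgeSet | ∀ v ∈ e, v ∈ (S : Set V)}
  have hadj (a b : V) : H.Adj a b ↔ a ∈ S ∧ b ∈ S ∧ G.Adj a b := by
    simp only [H, fromEdgeSet_adj, Set.mem_ofPred_eq, mem_edgeSet, Sym2.mem_iff, mem_coe]
    constructor
    · rintro ⟨⟨h, hS⟩, -⟩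
      exact ⟨hS a (.inl rfl), hS b (.inr rfl), h⟩
    · rintro ⟨ha, hb, h⟩
      exact ⟨⟨h, by rintro v (rfl | rfl) <;> assumption⟩, h.ne⟩
  have hdeg (v : V) : H.degree v = if v ∈ S then G.degreeIn S v else 0 := by
    rw [← card_neighborFinset_eq_degree, neighborFinset_eq_filter]
    split_ifs with hv
    · simp only [hadj, hv, true_and, degreeIn]
      congr 1
      ext
      simp
    · simp [hadj, hv]
  have hedges : edgesWithin G ↑S = H.edgeSet.ncard := by
    rw [edgesWithin, edgeSet_fromEdgeSet, sdiff_eq_left.2]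
    exact Set.disjoint_left.2 fun e he => G.not_isDiag_of_mem_edgeSet he.1
  have hsum := H.sum_degrees_eq_twice_card_edges
  simp only [hdeg, sum_ite_mem, univ_inter] at hsum
  rw [hsum, hedges, ← coe_edgeFinset, Set.ncard_coe_finset]
  congr!

lemma MutualVisibilitySet.sum_sq_sub_four_add (hcard : Fintype.card V = 50)
    (hreg : G.IsRegularOfDegree 7) (htf : G.CliqueFree 3)
    (huniq : ∀ u v : V, u ≠ v → ¬ G.Adj u v → ∃! w, G.Adj u w ∧ G.Adj w v)
    (hS : G.MutualVisibilitySet ↑S) :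
    ∑ t ∈ Sᶜ, ((G.degreeIn S t : ℤ) - 4) ^ 2 + 6 * (#S - ∑ u ∈ S, (G.degreeIn S u : ℤ))
      = (#S - 20) * (#S - 40) := by
  have hsum : (∑ t, G.degreeIn S t : ℤ) = 7 * #S := by
    exact_mod_cast sum_degreeIn.trans (by simp [hreg.degree_eq, mul_comm])
  have hsq := sum_degreeIn_sq_eq (S := S) hreg htf huniq
  have hsqS : ∑ u ∈ S, (G.degreeIn S u : ℤ) ^ 2 = ∑ u ∈ S, (G.degreeIn S u : ℤ) := by
    refine sum_congr rfl fun u hu => ?_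
    have := hS.degreeIn_le_one htf huniq hu
    interval_cases G.degreeIn S u <;> simp
  have hcardS : (#Sᶜ : ℤ) + #S = 50 := by exact_mod_cast (card_compl_add_card S).trans hcard
  rw [← sum_compl_add_sum S] at hsum hsq
  simp only [sub_sq, sum_add_distrib, sum_sub_distrib, ← sum_mul, ← mul_sum, sum_const,
    nsmul_eq_mul]
  push_cast at hsq ⊢
  linear_combination hsq - hsqS - 8 * hsum + 16 * hcardS

lemma MutualVisibilitySet.card_le_twenty (hcard : Fintype.card V = 50)
    (hreg : G.IsRegularOfDegree 7) (htf : G.CliqueFree 3)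
    (huniq : ∀ u v : V, u ≠ v → ¬ G.Adj u v → ∃! w, G.Adj u w ∧ G.Adj w v)
    (hS : G.MutualVisibilitySet ↑S) : #S ≤ 20 := by
  by_contra! h
  obtain ⟨T, hTS, hT⟩ := exists_subset_card_eq (show 21 ≤ #S by omega)
  have hTvis : G.MutualVisibilitySet ↑T := hS.mono (coe_subset.2 hTS)
  have hid := hTvis.sum_sq_sub_four_add hcard hreg htf huniq
  have hsq : 0 ≤ ∑ t ∈ Tᶜ, ((G.degreeIn T t : ℤ) - 4) ^ 2 := sum_nonneg fun _ _ => sq_nonneg _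
  have hle : ∑ u ∈ T, (G.degreeIn T u : ℤ) ≤ #T := by
    exact_mod_cast hTvis.sum_degreeIn_le_card htf huniq
  rw [hT] at hid hle
  push_cast at hid hle
  linarith

lemma MutualVisibilitySet.degreeIn_of_card_eq_twenty (hcard : Fintype.card V = 50)
    (hreg : G.IsRegularOfDegree 7) (htf : G.CliqueFree 3)
    (huniq : ∀ u v : V, u ≠ v → ¬ G.Adj u v → ∃! w, G.Adj u w ∧ G.Adj w v)
    (hS : G.MutualVisibilitySet ↑S) (h20 : #S = 20) :
    (∀ u ∈ S, G.degreeIn S u = 1) ∧ ∀ t ∉ S, G.degreeIn S t = 4 := by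
  have hid := hS.sum_sq_sub_four_add hcard hreg htf huniq
  have hsq : 0 ≤ ∑ t ∈ Sᶜ, ((G.degreeIn S t : ℤ) - 4) ^ 2 := sum_nonneg fun _ _ => sq_nonneg _
  have hle : ∑ u ∈ S, (G.degreeIn S u : ℤ) ≤ #S := by
    exact_mod_cast hS.sum_degreeIn_le_card htf huniq
  rw [h20] at hid hle
  push_cast at hid hle
  have hsq0 : ∑ t ∈ Sᶜ, ((G.degreeIn S t : ℤ) - 4) ^ 2 = 0 := by linarith
  have hsum : ∑ u ∈ S, G.degreeIn S u = ∑ u ∈ S, 1 := by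
    simp only [sum_const, h20, smul_eq_mul, mul_one]
    exact_mod_cast (show ∑ u ∈ S, (G.degreeIn S u : ℤ) = 20 by linarith)
  refine ⟨(sum_eq_sum_iff_of_le fun u hu => hS.degreeIn_le_one htf huniq hu).1 hsum,
    fun t ht => ?_⟩
  have hzero := (sum_eq_zero_iff_of_nonneg fun _ _ => sq_nonneg _).1 hsq0 t (mem_compl.2 ht)
  exact_mod_cast sub_eq_zero.1 ((pow_eq_zero_iff two_ne_zero).1 hzero)

end Counting

end SimpleGraph

theorem stmt18 {V : Type*} [Fintype V] (G : SimpleGraph V) [DecidableRel G.Adj]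
    (hcard : Fintype.card V = 50) (hreg : G.IsRegularOfDegree 7)
    (htf : G.CliqueFree 3)
    (huniq : ∀ u v : V, u ≠ v → ¬ G.Adj u v → ∃! w, G.Adj u w ∧ G.Adj w v) :
    (∀ S : Finset V, G.MutualVisibilitySet ↑S → S.card ≤ 20) ∧
      ∀ S : Finset V, G.MutualVisibilitySet ↑S → S.card = 20 →
        edgesWithin G ↑S = 10 ∧
        (∀ v ∈ S, {u ∈ (S : Set V) | G.Adj v u}.ncard = 1) ∧
        ∀ t : V, t ∉ S → {u ∈ (S : Set V) | G.Adj t u}.ncard = 4 := by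
  refine ⟨fun S hS => hS.card_le_twenty hcard hreg htf huniq, fun S hS h20 => ?_⟩
  obtain ⟨hin, hout⟩ := hS.degreeIn_of_card_eq_twenty hcard hreg htf huniq h20
  have hedges := G.two_mul_edgesWithin (S := S)
  rw [sum_congr rfl hin, sum_const, h20, smul_eq_mul, mul_one] at hedges
  refine ⟨by omega, fun v hv => ?_, fun t ht => ?_⟩
  · rw [G.ncard_setOf_mem_adj, hin v hv]
  · rw [G.ncard_setOf_mem_adj, hout t ht]
end

section
/- Let H be the Hoffman–Singleton graph. Then the maximum size of an induced matching in H is at most 10. -/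
open scoped Classical

def IsInducedMatching {V : Type*} (G : SimpleGraph V) (M : Finset (Sym2 V)) : Prop :=
  (↑M : Set (Sym2 V)) ⊆ G.edgeSet ∧
    ∀ e ∈ M, ∀ f ∈ M, e ≠ f → ∀ u ∈ e, ∀ v ∈ f, u ≠ v ∧ ¬ G.Adj u v

/-!
Let `S` be the `2m` vertices covered by the matching: each has exactly one neighbour in `S`, hence
`k - 1` neighbours outside. For `w ∉ S` let `d w` count its neighbours in `S`. In an
`srg(n, k, ℓ, μ)`, double counting gives `∑ d = |S|(k - 1)` and
`∑ d² = |S|(k - 1 + ℓ + μ(|S| - 2))`, because two distinct vertices of `S` have all their common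
neighbours outside `S`. Cauchy–Schwarz over the `n - |S|` outside vertices yields
`|S|(k - 1)² ≤ (n - |S|)(k - 1 + ℓ + μ(|S| - 2))`; for `(50, 7, 0, 1)` and `|S| = 2m` this is
`36m ≤ (25 - m)(2m + 4)`, i.e. `(m - 10)(m + 5) ≤ 0`.
-/

open Finset

namespace SimpleGraph

variable {V : Type*} {G : SimpleGraph V} [DecidableRel G.Adj]

theorem sum_card_filter_adj_comm (A B : Finset V) :
    ∑ a ∈ A, #{b ∈ B | G.Adj a b} = ∑ b ∈ B, #{a ∈ A | G.Adj b a} := by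
  simpa [bipartiteAbove, bipartiteBelow, G.adj_comm] using
    sum_card_bipartiteAbove_eq_sum_card_bipartiteBelow (s := A) (t := B) G.Adj

theorem sum_sq_card_filter_adj (A B : Finset V) :
    ∑ a ∈ A, #{b ∈ B | G.Adj a b} ^ 2 =
      ∑ s ∈ B, ∑ t ∈ B, #{a ∈ A | G.Adj s a ∧ G.Adj t a} := by
  have h := sum_card_bipartiteAbove_eq_sum_card_bipartiteBelow (s := A) (t := B ×ˢ B)
    (fun a p => G.Adj a p.1 ∧ G.Adj a p.2)
  rw [sum_product] at h
  convert h using 2 with a - s - t -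
  · rw [sq, ← card_product]
    congr 1
    ext p
    simp [bipartiteAbove, and_and_and_comm]
  · simp [bipartiteBelow, G.adj_comm]

variable [Fintype V]

theorem card_commonNeighbors_eq_card_filter (v w : V) :
    Fintype.card (G.commonNeighbors v w) = #{u | G.Adj v u ∧ G.Adj w u} := by
  rw [← Set.toFinset_card]
  congr 1
  ext u
  simp [mem_commonNeighbors]

section UniqueNeighborInSet

variable {S : Finset V} (hS : ∀ s ∈ S, #{t ∈ S | G.Adj s t} = 1)
include hS

theorem card_filter_compl_adj_of_unique_neighbor {k : ℕ} (hreg : G.IsRegularOfDegree k)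
    {s : V} (hs : s ∈ S) : #{w ∈ Sᶜ | G.Adj s w} = k - 1 := by
  have h := card_filter_add_card_filter_not (s := G.neighborFinset s) (· ∈ S)
  rw [card_neighborFinset_eq_degree, hreg.degree_eq] at h
  have hin : {t ∈ G.neighborFinset s | t ∈ S} = {t ∈ S | G.Adj s t} := by
    ext; simp [and_comm]
  have hout : {t ∈ G.neighborFinset s | t ∉ S} = {w ∈ Sᶜ | G.Adj s w} := by
    ext; simp [and_comm]
  rw [hin, hout, hS s hs] at h
  omega

theorem card_filter_compl_commonNeighbors_of_unique_neighbor {s t : V} (hs : s ∈ S)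
    (ht : t ∈ S) (hst : s ≠ t) :
    #{w ∈ Sᶜ | G.Adj s w ∧ G.Adj t w} = Fintype.card (G.commonNeighbors s t) := by
  -- a common neighbour `w ∈ S` would have the two neighbours `s ≠ t` in `S`
  rw [card_commonNeighbors_eq_card_filter]
  congr 1
  ext w
  simp only [mem_filter, mem_compl, mem_univ, true_and, and_iff_right_iff_imp]
  rintro ⟨hsw, htw⟩ hw
  obtain ⟨a, ha⟩ := card_eq_one.mp (hS w hw)
  have hsa : s ∈ ({a} : Finset V) := ha ▸ mem_filter.mpr ⟨hs, hsw.symm⟩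
  have hta : t ∈ ({a} : Finset V) := ha ▸ mem_filter.mpr ⟨ht, htw.symm⟩
  exact hst ((mem_singleton.mp hsa).trans (mem_singleton.mp hta).symm)

variable {n k ℓ μ : ℕ}

theorem IsSRGWith.sum_card_filter_compl_adj_adj (h : G.IsSRGWith n k ℓ μ) {s : V} (hs : s ∈ S) :
    ∑ t ∈ S, #{w ∈ Sᶜ | G.Adj s w ∧ G.Adj t w} = k - 1 + ℓ + μ * (#S - 2) := by
  obtain ⟨a, ha⟩ := card_eq_one.mp (hS s hs)
  have haS : a ∈ S ∧ G.Adj s a := mem_filter.mp (ha ▸ mem_singleton_self a)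
  have has : a ≠ s := haS.2.ne.symm
  rw [← add_sum_erase S _ hs, ← add_sum_erase (S.erase s) _ (mem_erase.mpr ⟨has, haS.1⟩)]
  have hother : ∀ t ∈ (S.erase s).erase a, #{w ∈ Sᶜ | G.Adj s w ∧ G.Adj t w} = μ := by
    intro t ht
    obtain ⟨hta, hts, htS⟩ : t ≠ a ∧ t ≠ s ∧ t ∈ S := by simpa using ht
    have hnadj : ¬ G.Adj s t := fun hst =>
      hta (mem_singleton.mp (ha ▸ mem_filter.mpr ⟨htS, hst⟩))
    rw [card_filter_compl_commonNeighbors_of_unique_neighbor hS hs htS hts.symm,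
      h.of_not_adj hts.symm hnadj]
  rw [sum_congr rfl hother, sum_const, card_erase_of_mem (mem_erase.mpr ⟨has, haS.1⟩),
    card_erase_of_mem hs, smul_eq_mul]
  simp only [and_self]
  rw [card_filter_compl_adj_of_unique_neighbor hS h.regular hs,
    card_filter_compl_commonNeighbors_of_unique_neighbor hS hs haS.1 has.symm, h.of_adj s a haS.2,
    Nat.sub_sub, mul_comm]
  ring

theorem IsSRGWith.card_mul_sq_le (h : G.IsSRGWith n k ℓ μ) :
    #S * (k - 1) ^ 2 ≤ (n - #S) * (k - 1 + ℓ + μ * (#S - 2)) := by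
  have hsum : ∑ w ∈ Sᶜ, #{s ∈ S | G.Adj w s} = #S * (k - 1) := by
    rw [sum_card_filter_adj_comm,
      sum_congr rfl fun s hs => card_filter_compl_adj_of_unique_neighbor hS h.regular hs,
      sum_const, smul_eq_mul]
  have hsum_sq : ∑ w ∈ Sᶜ, #{s ∈ S | G.Adj w s} ^ 2 = #S * (k - 1 + ℓ + μ * (#S - 2)) := by
    rw [sum_sq_card_filter_adj, sum_congr rfl fun s hs => h.sum_card_filter_compl_adj_adj hS hs,
      sum_const, smul_eq_mul]
  have hcs := sq_sum_le_card_mul_sum_sq (s := Sᶜ) (f := fun w => #{s ∈ S | G.Adj w s})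
  rw [hsum, hsum_sq, card_compl, h.card, Nat.cast_id] at hcs
  rcases S.eq_empty_or_nonempty with rfl | hne
  · simp
  refine Nat.le_of_mul_le_mul_left ?_ hne.card_pos
  calc #S * (#S * (k - 1) ^ 2) = (#S * (k - 1)) ^ 2 := by ring
    _ ≤ (n - #S) * (#S * (k - 1 + ℓ + μ * (#S - 2))) := hcs
    _ = #S * ((n - #S) * (k - 1 + ℓ + μ * (#S - 2))) := Nat.mul_left_comm ..

end UniqueNeighborInSet

theorem isSRGWith_zero_one_of_cliqueFree {n k : ℕ} (hcard : Fintype.card V = n)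
    (hreg : G.IsRegularOfDegree k) (htf : G.CliqueFree 3)
    (huniq : ∀ u v : V, u ≠ v → ¬ G.Adj u v → ∃! w, G.Adj u w ∧ G.Adj w v) :
    G.IsSRGWith n k 0 1 where
  card := hcard
  regular := hreg
  of_adj v w hvw := by
    rw [card_commonNeighbors_eq_card_filter, card_eq_zero, filter_eq_empty_iff]
    rintro u - ⟨hvu, hwu⟩
    exact htf {v, w, u} (is3Clique_triple_iff.mpr ⟨hvw, hvu, hwu⟩)
  of_not_adj v w hne hnadj := by
    obtain ⟨u, ⟨hvu, huw⟩, hunique⟩ := huniq v w hne hnadj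
    rw [card_commonNeighbors_eq_card_filter, card_eq_one]
    refine ⟨u, eq_singleton_iff_unique_mem.mpr ⟨by simp [hvu, huw.symm], ?_⟩⟩
    intro x hx
    obtain ⟨hvx, hwx⟩ := (mem_filter.mp hx).2
    exact hunique x ⟨hvx, hwx.symm⟩

end SimpleGraph

namespace IsInducedMatching

variable {V : Type*} {G : SimpleGraph V} {M : Finset (Sym2 V)}

theorem card_biUnion_toFinset [DecidableEq V] (hM : IsInducedMatching G M) :
    #(M.biUnion Sym2.toFinset) = 2 * #M := by
  rw [card_biUnion, sum_congr rfl fun e he =>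
      Sym2.card_toFinset_of_not_isDiag e (G.not_isDiag_of_mem_edgeSet (hM.1 he)),
    sum_const, smul_eq_mul, mul_comm]
  intro e he f hf hef
  refine disjoint_left.mpr fun x hxe hxf => ?_
  exact (hM.2 e he f hf hef x (Sym2.mem_toFinset.mp hxe) x (Sym2.mem_toFinset.mp hxf)).1 rfl

theorem card_filter_adj_eq_one [DecidableEq V] [DecidableRel G.Adj]
    (hM : IsInducedMatching G M) :
    ∀ s ∈ M.biUnion Sym2.toFinset, #{t ∈ M.biUnion Sym2.toFinset | G.Adj s t} = 1 := by
  intro s hs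
  obtain ⟨e, he, hse⟩ := mem_biUnion.mp hs
  obtain ⟨p, rfl⟩ : ∃ p, e = s(s, p) := ⟨_, (Sym2.other_spec (Sym2.mem_toFinset.mp hse)).symm⟩
  refine card_eq_one.mpr ⟨p, ?_⟩
  ext t
  simp only [mem_filter, mem_biUnion, Sym2.mem_toFinset, mem_singleton]
  constructor
  · rintro ⟨⟨f, hf, htf⟩, hst⟩
    by_cases hef : s(s, p) = f
    · subst hef
      rcases Sym2.mem_iff.mp htf with rfl | rfl
      · exact absurd hst (G.loopless.irrefl t)
      · rfl
    · exact absurd hst (hM.2 _ he f hf hef s (Sym2.mem_mk_left s p) t htf).2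
  · rintro rfl
    exact ⟨⟨_, he, Sym2.mem_mk_right s t⟩, hM.1 he⟩

end IsInducedMatching

theorem stmt19 {V : Type*} [Fintype V] (G : SimpleGraph V) [DecidableRel G.Adj]
    (hcard : Fintype.card V = 50) (hreg : G.IsRegularOfDegree 7)
    (htf : G.CliqueFree 3)
    (huniq : ∀ u v : V, u ≠ v → ¬ G.Adj u v → ∃! w, G.Adj u w ∧ G.Adj w v)
    (M : Finset (Sym2 V)) (hM : IsInducedMatching G M) : M.card ≤ 10 := by
  have hsrg := SimpleGraph.isSRGWith_zero_one_of_cliqueFree hcard hreg htf huniq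
  have hbound := hsrg.card_mul_sq_le hM.card_filter_adj_eq_one
  have hle : #(M.biUnion Sym2.toFinset) ≤ 50 := hcard ▸ card_le_univ _
  rw [hM.card_biUnion_toFinset] at hbound hle
  by_contra! hlt
  zify [hle, (by omega : 2 ≤ 2 * #M)] at hbound
  nlinarith
end
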